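/- Let X be an irreducible quasi-projective variety over a field K of characteristic 0, let Φ : X → X be an endomorphism, and let x ∈ X(K) be a point whose orbit O_Φ(x) is Zariski dense in X. Let Z be a proper closed subvariety of X. Then the set {n ∈ ℕ : Φ^n(x) ∈ Z} contains no infinite arithmetic progression; that is, there do not exist integers a ≥ 1 and b ≥ 0 such that Φ^{an+b}(x) ∈ Z for every n ∈ ℕ. -/

import Mathlib

open AlgebraicGeometry CategoryTheory Limits MvPolynomial

attribute [local instance] MvPolynomial.gradedAlgebra

/-- Projective `n`-space over a commutative ring `R`, obtained by base change of
`Proj ℤ[X₀,…,Xₙ]` along `Spec R ⟶ Spec ℤ`. -/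
noncomputable def ProjSpace (R : Type) [CommRing R] (n : ℕ) : Scheme :=
  pullback
    (specZIsTerminal.from (Proj (homogeneousSubmodule (Fin (n + 1)) ℤ)))
    (specZIsTerminal.from (Spec (CommRingCat.of R)))

/-- The structure morphism of projective `n`-space over `R`. -/
noncomputable def ProjSpace.structMap (R : Type) [CommRing R] (n : ℕ) :
    ProjSpace R n ⟶ Spec (CommRingCat.of R) :=
  pullback.snd _ _

/-- A scheme `X` over `Spec R` (with structure morphism `sX`) is a quasi-projective variety
over `R` if it is reduced and admits a locally closed immersion over `R` into some projective
space `ℙⁿ_R`. -/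
def IsQuasiProjectiveVarietyOver (R : Type) [CommRing R] {X : Scheme}
    (sX : X ⟶ Spec (CommRingCat.of R)) : Prop :=
  IsReduced X ∧ ∃ (n : ℕ) (g : X ⟶ ProjSpace R n),
    IsImmersion g ∧ g ≫ ProjSpace.structMap R n = sX

/-- The `n`-th iterate of an endomorphism of a scheme. -/
def iterHom {X : Scheme} (Φ : X ⟶ X) : ℕ → (X ⟶ X)
  | 0 => 𝟙 X
  | n + 1 => iterHom Φ n ≫ Φ

lemma iterHom_add {X : Scheme} (Φ : X ⟶ X) (m n : ℕ) :
    iterHom Φ (m + n) = iterHom Φ m ≫ iterHom Φ n := by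
  induction n with
  | zero => simp [iterHom]
  | succ n ih =>
    show iterHom Φ (m + n) ≫ Φ = _
    rw [ih]
    show _ = iterHom Φ m ≫ (iterHom Φ n ≫ Φ)
    simp [Category.assoc]

lemma exists_eq_univ_of_closed_cover {Y : Type*} [TopologicalSpace Y] [IrreducibleSpace Y]
    (s : Finset ℕ) (f : ℕ → Set Y) (hcl : ∀ i ∈ s, IsClosed (f i))
    (hcov : (Set.univ : Set Y) ⊆ ⋃ i ∈ s, f i) : ∃ i ∈ s, f i = Set.univ := by
  classical
  induction s using Finset.induction_on with
  | empty =>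
    obtain ⟨y⟩ : Nonempty Y := inferInstance
    simpa using hcov (Set.mem_univ y)
  | @insert c s hcs ih =>
    rw [Finset.set_biUnion_insert] at hcov
    have hpre : IsPreirreducible (Set.univ : Set Y) :=
      PreirreducibleSpace.isPreirreducible_univ
    rcases (isPreirreducible_iff_isClosed_union_isClosed.mp hpre) (f c) (⋃ i ∈ s, f i)
        (hcl c (Finset.mem_insert_self c s))
        (Set.Finite.isClosed_biUnion s.finite_toSet
          (fun i hi => hcl i (Finset.mem_insert_of_mem hi))) hcov with h | h
    · exact ⟨c, Finset.mem_insert_self c s, Set.eq_univ_of_univ_subset h⟩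
    · obtain ⟨i, hi, h⟩ := ih (fun i hi => hcl i (Finset.mem_insert_of_mem hi)) h
      exact ⟨i, Finset.mem_insert_of_mem hi, h⟩

/-- let `X` be an irreducible quasi-projective variety over a field `K` of
characteristic zero, `Φ` an endomorphism of `X` over `K`, and `x ∈ X(K)` a point with Zariski
dense orbit.  If `Z` is a proper closed subvariety of `X`, then the return set
`{n : Φⁿ(x) ∈ Z}` contains no infinite arithmetic progression `{an + b : n ∈ ℕ}` with
`a ≥ 1`. -/
theorem no_arithmetic_progression_in_return_set_of_dense_orbit
    (K : Type) [Field K] [CharZero K]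
    (X : Scheme) [IrreducibleSpace X]
    (sX : X ⟶ Spec (CommRingCat.of K))
    (hXqp : IsQuasiProjectiveVarietyOver K sX)
    (Φ : X ⟶ X) (hΦ : Φ ≫ sX = sX)
    (x : Spec (CommRingCat.of K) ⟶ X) (hx : x ≫ sX = 𝟙 _)
    (hdense : Dense (⋃ n : ℕ, Set.range (x ≫ iterHom Φ n).base))
    (Z : Set X) (hZclosed : IsClosed Z) (hZproper : Z ≠ Set.univ) :
    ¬ ∃ a b : ℕ, 1 ≤ a ∧ ∀ n : ℕ, Set.range (x ≫ iterHom Φ (a * n + b)).base ⊆ Z := by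
  rintro ⟨a, b, ha, hsub⟩
  obtain ⟨hred, N, g, hg, hgs⟩ := hXqp
  -- Separatedness of X
  haveI hP : Scheme.IsSeparated (ProjSpace K N) := by
    constructor
    have h1 : IsSeparated (specZIsTerminal.from (Spec (CommRingCat.of K))) := by
      have : specZIsTerminal.from (Spec (CommRingCat.of K)) =
          Spec.map (CommRingCat.ofHom (algebraMap ℤ K)) := specZIsTerminal.hom_ext _ _
      rw [this]; infer_instance
    haveI h2 : IsSeparated (pullback.fst
        (specZIsTerminal.from (Proj (homogeneousSubmodule (Fin (N + 1)) ℤ)))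
        (specZIsTerminal.from (Spec (CommRingCat.of K)))) :=
      MorphismProperty.of_isPullback (P := @IsSeparated) (IsPullback.of_hasPullback _ _).flip h1
    have h3 : IsSeparated ((pullback.fst
        (specZIsTerminal.from (Proj (homogeneousSubmodule (Fin (N + 1)) ℤ)))
        (specZIsTerminal.from (Spec (CommRingCat.of K)))) ≫
        terminal.from (Proj (homogeneousSubmodule (Fin (N + 1)) ℤ))) := inferInstance
    rw [terminal.comp_from] at h3
    exact h3
  haveI hXsep : Scheme.IsSeparated X := by
    constructor
    rw [← terminal.comp_from g]
    infer_instance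
  -- the orbit points, as closed immersions
  set σ : ℕ → (Spec (CommRingCat.of K) ⟶ X) := fun n => x ≫ iterHom Φ n with hσ
  have hiter_sX : ∀ n, iterHom Φ n ≫ sX = sX := by
    intro n
    induction n with
    | zero => simp [iterHom]
    | succ n ih =>
      show (iterHom Φ n ≫ Φ) ≫ sX = sX
      rw [Category.assoc, hΦ, ih]
  have hsec : ∀ n, σ n ≫ sX = 𝟙 _ := fun n => by
    rw [hσ, Category.assoc, hiter_sX, hx]
  haveI hci : ∀ n, IsClosedImmersion (σ n) := fun n => by
    haveI : IsClosedImmersion (σ n ≫ sX) := by rw [hsec]; infer_instance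
    exact IsClosedImmersion.of_comp (σ n) sX
  set R : ℕ → Set X := fun m => Set.range (σ m).base with hR
  have hRclosed : ∀ m, IsClosed (R m) := fun m =>
    ((σ m).isClosedEmbedding).isClosed_range
  have hσadd : ∀ m j, σ (m + j) = σ m ≫ iterHom Φ j := by
    intro m j
    rw [hσ]
    simp only [iterHom_add, Category.assoc]
  have hZmem : ∀ n, R (a * n + b) ⊆ Z := fun n => hsub n
  have hDdense : Dense (⋃ n, R n) := hdense
  -- a point of X cannot see R m = univ
  have hnotuniv : ∀ m, R m ≠ Set.univ := by
    intro m hm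
    obtain ⟨y, hy⟩ : ∃ y, y ∉ Z := by
      by_contra h
      push_neg at h
      exact hZproper (Set.eq_univ_of_forall h)
    have hz : (σ b).base default ∈ Z := by
      have := hZmem 0
      simp only [Nat.mul_zero, Nat.zero_add] at this
      exact this (Set.mem_range_self _)
    have h1 : y ∈ R m := hm ▸ Set.mem_univ y
    have h2 : (σ b).base default ∈ R m := hm ▸ Set.mem_univ _
    obtain ⟨u, hu⟩ := h1
    obtain ⟨v, hv⟩ := h2
    have : u = v := Subsingleton.elim u v
    rw [this, hv] at hu
    exact hy (hu ▸ hz)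
  -- first cover
  set V : ℕ → Set X := fun k => closure (⋃ n, R (a * n + b + k)) with hV
  set F : ℕ → Set X := fun i => if i < a then V i else R (i - a) with hF
  have hcov1 : (Set.univ : Set X) ⊆ ⋃ i ∈ Finset.range (a + b), F i := by
    have hclosed : IsClosed (⋃ i ∈ Finset.range (a + b), F i) := by
      apply Set.Finite.isClosed_biUnion (Finset.range (a + b)).finite_toSet
      intro i _
      rw [hF]
      dsimp only
      split
      · exact isClosed_closure
      · exact hRclosed _
    have hsubcov : (⋃ n, R n) ⊆ ⋃ i ∈ Finset.range (a + b), F i := by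
      rintro y ⟨s, ⟨m, rfl⟩, hy⟩
      by_cases hmb : m < b
      · refine Set.mem_iUnion.mpr ⟨a + m, Set.mem_iUnion.mpr ⟨Finset.mem_range.mpr (by omega), ?_⟩⟩
        rw [hF]
        dsimp only
        rw [if_neg (by omega)]
        have : a + m - a = m := by omega
        rw [this]; exact hy
      · have hk : (m - b) % a < a := Nat.mod_lt _ (by omega)
        refine Set.mem_iUnion.mpr ⟨(m - b) % a,
          Set.mem_iUnion.mpr ⟨Finset.mem_range.mpr (by omega), ?_⟩⟩
        rw [hF]
        dsimp only
        rw [if_pos hk]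
        apply subset_closure
        refine Set.mem_iUnion.mpr ⟨(m - b) / a, ?_⟩
        have : a * ((m - b) / a) + b + (m - b) % a = m := by
          have := Nat.div_add_mod (m - b) a
          omega
        rw [this]; exact hy
    calc (Set.univ : Set X) = closure (⋃ n, R n) := (hDdense.closure_eq).symm
      _ ⊆ ⋃ i ∈ Finset.range (a + b), F i := closure_minimal hsubcov hclosed
  obtain ⟨i, hi, hFi⟩ := exists_eq_univ_of_closed_cover _ F
    (by
      intro i _
      rw [hF]; dsimp only; split
      · exact isClosed_closure
      · exact hRclosed _) hcov1
  rw [hF] at hFi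
  dsimp only at hFi
  by_cases hia : i < a
  · rw [if_pos hia] at hFi
    -- V i = univ ; let j = a - i ≥ 1, show range (Φ^j) ⊆ Z
    set j : ℕ := a - i with hj
    have hj1 : 1 ≤ j := by omega
    have hrange : Set.range (iterHom Φ j).base ⊆ Z := by
      have hpre : V i ⊆ (iterHom Φ j).base ⁻¹' Z := by
        apply closure_minimal _ (hZclosed.preimage (iterHom Φ j).base.hom.continuous)
        rintro y ⟨s, ⟨n, rfl⟩, hy⟩
        obtain ⟨u, rfl⟩ := hy
        show (iterHom Φ j).base ((σ (a * n + b + i)).base u) ∈ Z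
        have : (iterHom Φ j).base ((σ (a * n + b + i)).base u)
            = (σ (a * n + b + i + j)).base u := by
          rw [hσadd (a * n + b + i) j]; rfl
        rw [this]
        have heq : a * n + b + i + j = a * (n + 1) + b := by
          have h' : a * (n + 1) = a * n + a := by ring
          omega
        rw [heq]
        exact hZmem (n + 1) (Set.mem_range_self _)
      intro y hy
      obtain ⟨w, rfl⟩ := hy
      have : w ∈ V i := hFi ▸ Set.mem_univ w
      exact hpre this
    -- second cover
    set F' : ℕ → Set X := fun i => if i < j then R i else Z with hF'
    have hcov2 : (Set.univ : Set X) ⊆ ⋃ i ∈ Finset.range (j + 1), F' i := by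
      have hclosed : IsClosed (⋃ i ∈ Finset.range (j + 1), F' i) := by
        apply Set.Finite.isClosed_biUnion (Finset.range (j + 1)).finite_toSet
        intro i _
        rw [hF']; dsimp only; split
        · exact hRclosed _
        · exact hZclosed
      have hsubcov : (⋃ n, R n) ⊆ ⋃ i ∈ Finset.range (j + 1), F' i := by
        rintro y ⟨s, ⟨m, rfl⟩, hy⟩
        by_cases hmj : m < j
        · refine Set.mem_iUnion.mpr ⟨m, Set.mem_iUnion.mpr ⟨Finset.mem_range.mpr (by omega), ?_⟩⟩
          rw [hF']; dsimp only; rw [if_pos hmj]; exact hy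
        · refine Set.mem_iUnion.mpr ⟨j, Set.mem_iUnion.mpr ⟨Finset.mem_range.mpr (by omega), ?_⟩⟩
          rw [hF']; dsimp only; rw [if_neg (by omega)]
          obtain ⟨u, rfl⟩ := hy
          have hsm : σ m = σ (m - j) ≫ iterHom Φ j := by
            have hm' : m = (m - j) + j := by omega
            conv_lhs => rw [hm']
            rw [hσadd]
          rw [hsm]
          exact hrange (Set.mem_range_self ((σ (m - j)).base u))
      calc (Set.univ : Set X) = closure (⋃ n, R n) := (hDdense.closure_eq).symm
        _ ⊆ ⋃ i ∈ Finset.range (j + 1), F' i := closure_minimal hsubcov hclosed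
    obtain ⟨i', _, hFi'⟩ := exists_eq_univ_of_closed_cover _ F'
      (by
        intro i _
        rw [hF']; dsimp only; split
        · exact hRclosed _
        · exact hZclosed) hcov2
    rw [hF'] at hFi'
    dsimp only at hFi'
    by_cases hij : i' < j
    · rw [if_pos hij] at hFi'
      exact hnotuniv _ hFi'
    · rw [if_neg hij] at hFi'
      exact hZproper hFi'
  · rw [if_neg hia] at hFi
    exact hnotuniv _ hFi
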